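/- For bounded operators X, Y on a complex Hilbert space H, the numerical radius of the 2×2 operator matrix [[X, Y],[Y, X]] on H ⊕ H equals max{w(X+Y), w(X−Y)}. -/

import Mathlib

open scoped InnerProductSpace
open ContinuousLinearMap
noncomputable section
set_option synthInstance.maxHeartbeats 1000000
set_option maxHeartbeats 1000000
set_option linter.unusedSectionVars false

variable {H : Type*} [NormedAddCommGroup H] [InnerProductSpace ℂ H] [CompleteSpace H]

/-- The numerical radius of a bounded operator. -/
noncomputable def numRadius (T : H →L[ℂ] H) : ℝ :=
  sSup {r : ℝ | ∃ x : H, ‖x‖ = 1 ∧ r = ‖(⟪T x, x⟫_ℂ)‖}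

/-- The 2×2 block operator [[X, Y],[Z, W]] on H ⊕ H (ℓ² direct sum). -/
noncomputable def blockOp (X Y Z W : H →L[ℂ] H) :
    WithLp 2 (H × H) →L[ℂ] WithLp 2 (H × H) :=
  ((WithLp.prodContinuousLinearEquiv 2 ℂ H H).symm.toContinuousLinearMap) ∘L
    ((X ∘L ContinuousLinearMap.fst ℂ H H + Y ∘L ContinuousLinearMap.snd ℂ H H).prod
      (Z ∘L ContinuousLinearMap.fst ℂ H H + W ∘L ContinuousLinearMap.snd ℂ H H)) ∘L
    ((WithLp.prodContinuousLinearEquiv 2 ℂ H H).toContinuousLinearMap)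

namespace NumRadiusAux

lemma numRadius_nonneg (T : H →L[ℂ] H) : 0 ≤ numRadius T :=
  Real.sSup_nonneg (by rintro r ⟨x, hx, rfl⟩; positivity)

lemma numRadius_bddAbove (T : H →L[ℂ] H) :
    BddAbove {r : ℝ | ∃ x : H, ‖x‖ = 1 ∧ r = ‖(⟪T x, x⟫_ℂ)‖} := by
  refine ⟨‖T‖, ?_⟩
  rintro r ⟨x, hx, rfl⟩
  calc ‖(⟪T x, x⟫_ℂ)‖ ≤ ‖T x‖ * ‖x‖ := norm_inner_le_norm _ _
    _ ≤ (‖T‖ * ‖x‖) * ‖x‖ := by gcongr; exact T.le_opNorm x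
    _ = ‖T‖ := by rw [hx]; ring

lemma inner_le_numRadius_unit (T : H →L[ℂ] H) {x : H} (hx : ‖x‖ = 1) :
    ‖(⟪T x, x⟫_ℂ)‖ ≤ numRadius T :=
  le_csSup (numRadius_bddAbove T) ⟨x, hx, rfl⟩

lemma inner_le_numRadius (T : H →L[ℂ] H) (u : H) :
    ‖(⟪T u, u⟫_ℂ)‖ ≤ numRadius T * ‖u‖ ^ 2 := by
  rcases eq_or_ne u 0 with rfl | hu
  · simp
  · have hn : (0:ℝ) < ‖u‖ := norm_pos_iff.mpr hu
    set e : H := ((‖u‖ : ℂ))⁻¹ • u with he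
    have hne : ‖e‖ = 1 := by
      rw [he, norm_smul, norm_inv, Complex.norm_real, Real.norm_eq_abs,
        abs_of_pos hn, inv_mul_cancel₀ hn.ne']
    have hid : ⟪T e, e⟫_ℂ = ((‖u‖ : ℂ))⁻¹ * (((‖u‖ : ℂ))⁻¹ * ⟪T u, u⟫_ℂ) := by
      rw [he, map_smul, inner_smul_left, inner_smul_right, map_inv₀, Complex.conj_ofReal]
    have := inner_le_numRadius_unit T hne
    rw [hid] at this
    have hnorm : ‖((‖u‖ : ℂ))⁻¹ * (((‖u‖ : ℂ))⁻¹ * ⟪T u, u⟫_ℂ)‖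
        = (‖u‖)⁻¹ * ((‖u‖)⁻¹ * ‖(⟪T u, u⟫_ℂ)‖) := by
      simp [norm_mul, norm_inv, Complex.norm_real, abs_of_pos hn]
    rw [hnorm] at this
    have h2 : ‖(⟪T u, u⟫_ℂ)‖ = ‖u‖^2 * ((‖u‖)⁻¹ * ((‖u‖)⁻¹ * ‖(⟪T u, u⟫_ℂ)‖)) := by
      field_simp
    rw [h2, pow_two]
    calc ‖u‖ * ‖u‖ * ((‖u‖)⁻¹ * ((‖u‖)⁻¹ * ‖(⟪T u, u⟫_ℂ)‖))
        ≤ ‖u‖ * ‖u‖ * numRadius T := by gcongr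
      _ = numRadius T * (‖u‖ * ‖u‖) := by ring

lemma blockOp_inner (X Y Z W : H →L[ℂ] H) (v : WithLp 2 (H × H)) :
    ⟪blockOp X Y Z W v, v⟫_ℂ
      = ⟪X v.fst + Y v.snd, v.fst⟫_ℂ + ⟪Z v.fst + W v.snd, v.snd⟫_ℂ := rfl

lemma sqrt2_sq : ((((Real.sqrt 2)⁻¹ : ℝ) : ℂ)) * ((((Real.sqrt 2)⁻¹ : ℝ) : ℂ)) = 1/2 := by
  rw [← Complex.ofReal_mul, ← mul_inv, Real.mul_self_sqrt (by norm_num : (0:ℝ) ≤ 2)]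
  norm_num

lemma circ_identity (X Y : H →L[ℂ] H) (a b : H) :
    ⟪X a + Y b, a⟫_ℂ + ⟪Y a + X b, b⟫_ℂ
      = ⟪(X + Y) ((((Real.sqrt 2)⁻¹ : ℝ) : ℂ) • (a + b)),
          ((((Real.sqrt 2)⁻¹ : ℝ) : ℂ) • (a + b))⟫_ℂ
      + ⟪(X - Y) ((((Real.sqrt 2)⁻¹ : ℝ) : ℂ) • (a - b)),
          ((((Real.sqrt 2)⁻¹ : ℝ) : ℂ) • (a - b))⟫_ℂ := by
  have h2 := sqrt2_sq
  simp only [map_smul, inner_smul_left, inner_smul_right, Complex.conj_ofReal,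
    add_apply, sub_apply, map_add, map_sub, inner_add_left, inner_add_right,
    inner_sub_left, inner_sub_right]
  linear_combination (-2 * (⟪X a, a⟫_ℂ + ⟪Y b, a⟫_ℂ + ⟪Y a, b⟫_ℂ + ⟪X b, b⟫_ℂ)) * h2

lemma norm_c_smul (z : H) : ‖(((Real.sqrt 2)⁻¹ : ℝ) : ℂ) • z‖ = (Real.sqrt 2)⁻¹ * ‖z‖ := by
  rw [norm_smul, Complex.norm_real, Real.norm_eq_abs,
    abs_of_nonneg (by positivity : (0:ℝ) ≤ (Real.sqrt 2)⁻¹)]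

lemma norm_split {a b : H} (h : ‖a‖ ^ 2 + ‖b‖ ^ 2 = 1) :
    ‖(((Real.sqrt 2)⁻¹ : ℝ) : ℂ) • (a + b)‖ ^ 2
      + ‖(((Real.sqrt 2)⁻¹ : ℝ) : ℂ) • (a - b)‖ ^ 2 = 1 := by
  have hpar : ‖a + b‖ ^ 2 + ‖a - b‖ ^ 2 = 2 * (‖a‖ ^ 2 + ‖b‖ ^ 2) := by
    have h1 := @norm_add_sq_real H _ (InnerProductSpace.rclikeToReal ℂ H) a b
    have h2 := @norm_sub_sq_real H _ (InnerProductSpace.rclikeToReal ℂ H) a b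
    rw [h1, h2]; ring
  rw [norm_c_smul, norm_c_smul, mul_pow, mul_pow, ← mul_add, hpar, h, mul_one]
  rw [inv_pow, Real.sq_sqrt (by norm_num : (0:ℝ) ≤ 2)]
  norm_num

end NumRadiusAux

open NumRadiusAux

theorem numRadius_circulant (X Y : H →L[ℂ] H) :
    numRadius (blockOp X Y Y X) = max (numRadius (X + Y)) (numRadius (X - Y)) := by
  set c : ℂ := (((Real.sqrt 2)⁻¹ : ℝ) : ℂ) with hc
  set T := blockOp X Y Y X with hT
  set M := max (numRadius (X + Y)) (numRadius (X - Y)) with hM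
  have hM0 : 0 ≤ M := le_trans (numRadius_nonneg (X + Y)) (le_max_left _ _)
  apply le_antisymm
  · -- w(T) ≤ M
    apply Real.sSup_le _ hM0
    rintro r ⟨v, hv, rfl⟩
    have hnv : ‖v.fst‖ ^ 2 + ‖v.snd‖ ^ 2 = 1 := by
      have := WithLp.prod_norm_sq_eq_of_L2 v
      rw [hv] at this; linarith [this.symm]
    set u : H := c • (v.fst + v.snd) with hu
    set w : H := c • (v.fst - v.snd) with hw
    have hsplit : ‖u‖ ^ 2 + ‖w‖ ^ 2 = 1 := norm_split hnv
    have hid : ⟪T v, v⟫_ℂ = ⟪(X + Y) u, u⟫_ℂ + ⟪(X - Y) w, w⟫_ℂ := by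
      rw [hT, blockOp_inner, circ_identity]
    calc ‖(⟪T v, v⟫_ℂ)‖ = ‖⟪(X + Y) u, u⟫_ℂ + ⟪(X - Y) w, w⟫_ℂ‖ := by rw [hid]
      _ ≤ ‖(⟪(X + Y) u, u⟫_ℂ)‖ + ‖(⟪(X - Y) w, w⟫_ℂ)‖ := norm_add_le _ _
      _ ≤ numRadius (X + Y) * ‖u‖ ^ 2 + numRadius (X - Y) * ‖w‖ ^ 2 :=
          add_le_add (inner_le_numRadius _ u) (inner_le_numRadius _ w)
      _ ≤ M * ‖u‖ ^ 2 + M * ‖w‖ ^ 2 := by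
          gcongr <;> [exact le_max_left _ _; exact le_max_right _ _]
      _ = M := by rw [← mul_add, hsplit, mul_one]
  · -- M ≤ w(T)
    have key : ∀ (s : ℂ), ‖s‖ = 1 → ∀ x : H, ‖x‖ = 1 →
        ∃ v : WithLp 2 (H × H), ‖v‖ = 1 ∧ v.fst = c • x ∧ v.snd = s • (c • x) := by
      intro s hs x hx
      have h1 : ‖c • x‖ = (Real.sqrt 2)⁻¹ := by rw [hc, norm_c_smul, hx, mul_one]
      have h2 : ‖s • (c • x)‖ = (Real.sqrt 2)⁻¹ := by rw [norm_smul, hs, one_mul, h1]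
      refine ⟨(WithLp.equiv 2 (H × H)).symm (c • x, s • (c • x)), ?_, ?_, ?_⟩
      · rw [WithLp.prod_norm_eq_of_L2]
        simp only [WithLp.equiv_symm_apply, WithLp.toLp_fst, WithLp.toLp_snd]
        rw [h1, h2, ← two_mul, inv_pow, Real.sq_sqrt (by norm_num : (0:ℝ) ≤ 2)]
        norm_num
      · exact WithLp.toLp_fst _
      · exact WithLp.toLp_snd _
    apply max_le
    · apply Real.sSup_le _ (numRadius_nonneg T)
      rintro r ⟨x, hx, rfl⟩
      obtain ⟨v, hv, hf, hsnd⟩ := key 1 (by norm_num) x hx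
      have hid : ⟪T v, v⟫_ℂ = ⟪(X + Y) x, x⟫_ℂ := by
        rw [hT, blockOp_inner, hf, hsnd, one_smul]
        simp only [map_smul, inner_smul_left, inner_smul_right, Complex.conj_ofReal, hc,
          add_apply, inner_add_left, map_add]
        linear_combination (2 * (⟪X x, x⟫_ℂ + ⟪Y x, x⟫_ℂ)) * sqrt2_sq
      exact hid ▸ inner_le_numRadius_unit T hv
    · apply Real.sSup_le _ (numRadius_nonneg T)
      rintro r ⟨x, hx, rfl⟩
      obtain ⟨v, hv, hf, hsnd⟩ := key (-1) (by norm_num) x hx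
      have hid : ⟪T v, v⟫_ℂ = ⟪(X - Y) x, x⟫_ℂ := by
        rw [hT, blockOp_inner, hf, hsnd, neg_one_smul]
        simp only [map_smul, map_neg, inner_smul_left, inner_smul_right, inner_neg_left,
          inner_neg_right, Complex.conj_ofReal, hc, sub_apply, inner_add_left, inner_sub_left,
          map_add, map_sub]
        linear_combination (2 * (⟪X x, x⟫_ℂ - ⟪Y x, x⟫_ℂ)) * sqrt2_sq
      exact hid ▸ inner_le_numRadius_unit T hv
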